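/- Let D be a Hom-finite triangulated category over a field k with Serre functor S. Let X, Y ∈ D, U = ⊕_{k=0}^{m} S^k X and V = ⊕_{k=0}^{r} S^k Y with m, r ≥ 0, and suppose Hom(U,U[n]) = 0 and Hom(V,V[n]) = 0 for all n ≠ 0. Then Hom(U ⊕ V, (U ⊕ V)[n]) = 0 for all n ≠ 0 if and only if Hom(X, S^k Y[n]) = 0 for all −m ≤ k ≤ r + 1 and all n ≠ 0. -/

import Mathlib

open CategoryTheory CategoryTheory.Limits CategoryTheory.Pretriangulated

/-- Integer powers of an (auto)equivalence S, applied to objects: Sᶻ A. -/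
def equivPowObj {D : Type} [Category D] (S : D ≌ D) (z : ℤ) (A : D) : D :=
  if 0 ≤ z then (S.functor.obj)^[z.toNat] A else (S.inverse.obj)^[(-z).toNat] A

section Aux

variable {D : Type} [Category D]

private lemma subEq {α β : Sort*} (e : α ≃ β) :
    (∀ f g : α, f = g) ↔ (∀ f g : β, f = g) :=
  ⟨fun h f g => by rw [← e.apply_symm_apply f, ← e.apply_symm_apply g, h (e.symm f) (e.symm g)],
   fun h f g => e.injective (h _ _)⟩

private lemma subIso {A A' B B' : D} (eA : A ≅ A') (eB : B ≅ B') :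
    (∀ f g : (A ⟶ B), f = g) ↔ (∀ f g : (A' ⟶ B'), f = g) :=
  subEq (eA.homCongr eB)

private lemma subMap (F : D ⥤ D) [F.Full] [F.Faithful] (A B : D) :
    (∀ f g : (A ⟶ B), f = g) ↔ (∀ f g : (F.obj A ⟶ F.obj B), f = g) :=
  subEq (Functor.FullyFaithful.ofFullyFaithful F).homEquiv

private lemma subZero [Preadditive D] (A B : D) :
    (∀ f : A ⟶ B, f = 0) ↔ (∀ f g : (A ⟶ B), f = g) :=
  ⟨fun h f g => (h f).trans (h g).symm, fun h f => h f 0⟩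

private lemma zeroIso [Preadditive D] {A A' B B' : D} (eA : A ≅ A') (eB : B ≅ B') :
    (∀ f : A ⟶ B, f = 0) ↔ (∀ f : A' ⟶ B', f = 0) :=
  (subZero A B).trans ((subIso eA eB).trans (subZero A' B').symm)

private lemma subSerre (k : Type) [Field k] [Preadditive D] [Linear k D] (S : D ≌ D)
    (hSerre : ∀ A B : D, Nonempty ((A ⟶ B) ≃ₗ[k] Module.Dual k (B ⟶ S.functor.obj A)))
    (A B : D) :
    (∀ f g : (A ⟶ B), f = g) ↔ (∀ f g : (B ⟶ S.functor.obj A), f = g) := by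
  obtain ⟨e⟩ := hSerre A B
  calc (∀ f g : (A ⟶ B), f = g) ↔ Subsingleton (A ⟶ B) := subsingleton_iff.symm
    _ ↔ Subsingleton (Module.Dual k (B ⟶ S.functor.obj A)) := Equiv.subsingleton_congr e.toEquiv
    _ ↔ Subsingleton (B ⟶ S.functor.obj A) := Module.subsingleton_dual_iff k
    _ ↔ _ := subsingleton_iff

private lemma subShift [HasShift D ℤ] (n : ℤ) (A B : D) :
    (∀ f g : (A ⟶ (shiftFunctor D n).obj B), f = g) ↔
      (∀ f g : ((shiftFunctor D (-n)).obj A ⟶ B), f = g) :=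
  (subMap (shiftFunctor D (-n)) _ _).trans
    (subIso (Iso.refl _) ((shiftEquiv D n).unitIso.app B).symm)

private lemma subShift' [HasShift D ℤ] (n : ℤ) (A B : D) :
    (∀ f g : ((shiftFunctor D n).obj A ⟶ B), f = g) ↔
      (∀ f g : (A ⟶ (shiftFunctor D (-n)).obj B), f = g) :=
  (subMap (shiftFunctor D (-n)) _ _).trans
    (subIso ((shiftEquiv D n).unitIso.app A).symm (Iso.refl _))


/-- Map an isomorphism through an iterate of a functor's object map. -/
private def iterMapIso (F : D ⥤ D) (t : ℕ) {W W' : D} (e : W ≅ W') :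
    F.obj^[t] W ≅ F.obj^[t] W' := by
  induction t generalizing W W' with
  | zero => exact e
  | succ t ih =>
    rw [Function.iterate_succ_apply, Function.iterate_succ_apply]
    exact ih (F.mapIso e)

/-- Cancellation iso `G^[t] (S^[t] W) ≅ W` for an equivalence. -/
private def serreCancelIso (S : D ≌ D) (t : ℕ) (W : D) :
    (S.inverse.obj)^[t] ((S.functor.obj)^[t] W) ≅ W := by
  induction t with
  | zero => exact Iso.refl W
  | succ t ih =>
    rw [Function.iterate_succ_apply' (S.functor.obj), Function.iterate_succ_apply (S.inverse.obj)]
    exact (iterMapIso S.inverse t (S.unitIso.app ((S.functor.obj)^[t] W)).symm).trans ih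

private def powIso (S : D ≌ D) (i j : ℕ) (Y : D) :
    (S.inverse.obj)^[i] ((S.functor.obj)^[j] Y) ≅ equivPowObj S ((j : ℤ) - (i : ℤ)) Y := by
  unfold equivPowObj
  by_cases h : i ≤ j
  · rw [if_pos (by omega)]
    have h1 : ((j : ℤ) - (i : ℤ)).toNat = j - i := by omega
    rw [h1]
    have h2 : (S.functor.obj)^[j] Y = (S.functor.obj)^[i] ((S.functor.obj)^[j - i] Y) := by
      rw [← Function.iterate_add_apply, Nat.add_sub_cancel' h]
    rw [h2]
    exact serreCancelIso S i _
  · rw [if_neg (by omega)]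
    have h1 : (-((j : ℤ) - (i : ℤ))).toNat = i - j := by omega
    rw [h1]
    have h2 : (S.inverse.obj)^[i] ((S.functor.obj)^[j] Y)
        = (S.inverse.obj)^[i - j] ((S.inverse.obj)^[j] ((S.functor.obj)^[j] Y)) := by
      rw [← Function.iterate_add_apply, Nat.sub_add_cancel (by omega)]
    rw [h2]
    exact iterMapIso S.inverse (i - j) (serreCancelIso S j Y)

private lemma zeroFromBiproduct [Preadditive D] {ι : Type} [Fintype ι] [DecidableEq ι]
    (f : ι → D) [HasBiproduct f] (C : D) :
    (∀ g : (⨁ f) ⟶ C, g = 0) ↔ ∀ i, ∀ g : f i ⟶ C, g = 0 := by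
  constructor
  · intro h i g
    have h1 : biproduct.ι f i ≫ biproduct.desc (Function.update (fun j => (0 : f j ⟶ C)) i g)
        = g := by simp
    rw [← h1, h (biproduct.desc _), Limits.comp_zero]
  · intro h g
    apply biproduct.hom_ext'
    intro j
    rw [h j (biproduct.ι f j ≫ g), Limits.comp_zero]

private lemma zeroToBiproduct [Preadditive D] {ι : Type} [Fintype ι] [DecidableEq ι]
    (f : ι → D) [HasBiproduct f] (C : D) :
    (∀ g : C ⟶ (⨁ f), g = 0) ↔ ∀ i, ∀ g : C ⟶ f i, g = 0 := by
  constructor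
  · intro h i g
    have h1 : biproduct.lift (Function.update (fun j => (0 : C ⟶ f j)) i g) ≫ biproduct.π f i
        = g := by simp
    rw [← h1, h (biproduct.lift _), Limits.zero_comp]
  · intro h g
    apply biproduct.hom_ext
    intro j
    rw [h j (g ≫ biproduct.π f j), Limits.zero_comp]

private lemma zeroFromBiprod [Preadditive D] (A B C : D) [HasBinaryBiproduct A B] :
    (∀ g : A ⊞ B ⟶ C, g = 0) ↔ ((∀ g : A ⟶ C, g = 0) ∧ (∀ g : B ⟶ C, g = 0)) := by
  constructor
  · intro h
    constructor
    · intro g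
      rw [← biprod.inl_desc g (0 : B ⟶ C), h (biprod.desc g 0), Limits.comp_zero]
    · intro g
      rw [← biprod.inr_desc (0 : A ⟶ C) g, h (biprod.desc 0 g), Limits.comp_zero]
  · rintro ⟨h1, h2⟩ g
    apply biprod.hom_ext'
    · rw [h1 (biprod.inl ≫ g), Limits.comp_zero]
    · rw [h2 (biprod.inr ≫ g), Limits.comp_zero]

private lemma zeroToBiprod [Preadditive D] (A B C : D) [HasBinaryBiproduct A B] :
    (∀ g : C ⟶ A ⊞ B, g = 0) ↔ ((∀ g : C ⟶ A, g = 0) ∧ (∀ g : C ⟶ B, g = 0)) := by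
  constructor
  · intro h
    constructor
    · intro g
      rw [← biprod.lift_fst g (0 : C ⟶ B), h (biprod.lift g 0), Limits.zero_comp]
    · intro g
      rw [← biprod.lift_snd (0 : C ⟶ A) g, h (biprod.lift 0 g), Limits.zero_comp]
  · rintro ⟨h1, h2⟩ g
    apply biprod.hom_ext
    · rw [h1 (g ≫ biprod.fst), Limits.zero_comp]
    · rw [h2 (g ≫ biprod.snd), Limits.zero_comp]

variable (k : Type) [Field k] [Preadditive D] [Linear k D] [HasShift D ℤ] (S : D ≌ D)

variable (hSerre : ∀ A B : D, Nonempty ((A ⟶ B) ≃ₗ[k] Module.Dual k (B ⟶ S.functor.obj A)))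

include hSerre

private lemma stepUp (n : ℤ) (A B : D) :
    (∀ f g : (A ⟶ (shiftFunctor D n).obj B), f = g) ↔
      (∀ f g : (S.functor.obj A ⟶ (shiftFunctor D n).obj (S.functor.obj B)), f = g) :=
  (subSerre k S hSerre A _).trans <|
    (subShift' n _ _).trans <|
      (subSerre k S hSerre _ _).trans <|
        (subShift n _ _).symm

private lemma stepDown (n : ℤ) (A B : D) :
    (∀ f g : (A ⟶ (shiftFunctor D n).obj B), f = g) ↔
      (∀ f g : (S.inverse.obj A ⟶ (shiftFunctor D n).obj (S.inverse.obj B)), f = g) :=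
  ((stepUp k S hSerre n (S.inverse.obj A) (S.inverse.obj B)).trans
    (subIso (S.counitIso.app A) ((shiftFunctor D n).mapIso (S.counitIso.app B)))).symm

private lemma stepIter (i : ℕ) (n : ℤ) (A B : D) :
    (∀ f g : ((S.functor.obj)^[i] A ⟶ (shiftFunctor D n).obj B), f = g) ↔
      (∀ f g : (A ⟶ (shiftFunctor D n).obj ((S.inverse.obj)^[i] B)), f = g) := by
  induction i generalizing A with
  | zero => exact Iff.rfl
  | succ i ih =>
    rw [Function.iterate_succ_apply (S.functor.obj) i A,
      Function.iterate_succ_apply' (S.inverse.obj) i B]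
    exact (ih (S.functor.obj A)).trans <|
      (stepDown k S hSerre n (S.functor.obj A) ((S.inverse.obj)^[i] B)).trans
        (subIso (S.unitIso.app A).symm (Iso.refl _))

private lemma key1 (X Y : D) (i j : ℕ) (n : ℤ) :
    (∀ f : ((S.functor.obj)^[i] X ⟶ (shiftFunctor D n).obj ((S.functor.obj)^[j] Y)), f = 0) ↔
      (∀ f : (X ⟶ (shiftFunctor D n).obj (equivPowObj S ((j : ℤ) - (i : ℤ)) Y)), f = 0) :=
  (subZero _ _).trans <| (stepIter k S hSerre i n X _).trans <|
    (subIso (Iso.refl X) ((shiftFunctor D n).mapIso (powIso S i j Y))).trans (subZero _ _).symm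

private lemma key2 (X Y : D) (i j : ℕ) (n : ℤ) :
    (∀ f : ((S.functor.obj)^[j] Y ⟶ (shiftFunctor D n).obj ((S.functor.obj)^[i] X)), f = 0) ↔
      (∀ f : ((S.functor.obj)^[i] X ⟶
        (shiftFunctor D (-n)).obj ((S.functor.obj)^[j + 1] Y)), f = 0) := by
  rw [Function.iterate_succ_apply' (S.functor.obj) j Y]
  exact (subZero _ _).trans <| (subSerre k S hSerre _ _).trans <|
    (subShift' n _ _).trans (subZero _ _).symm


end Aux

/-- Lemma A.2: for a Hom-finite triangulated category D over a field k with Serre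
functor S, and extension-free U = ⊕_{k=0}^m Sᵏ X and V = ⊕_{k=0}^r Sᵏ Y, the object
U ⊕ V is extension-free iff Hom(X, Sᵏ Y[n]) = 0 for all -m ≤ k ≤ r+1 and n ≠ 0. -/
theorem extension_free_sum_of_serre_orbits
    (k : Type) [Field k]
    (D : Type) [Category D] [Preadditive D] [Linear k D]
    [HasZeroObject D] [HasShift D ℤ] [∀ n : ℤ, (shiftFunctor D n).Additive]
    [Pretriangulated D] [HasFiniteBiproducts D]
    [∀ A B : D, FiniteDimensional k (A ⟶ B)]
    (S : D ≌ D)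
    (hSerre : ∀ A B : D, Nonempty ((A ⟶ B) ≃ₗ[k] Module.Dual k (B ⟶ S.functor.obj A)))
    (X Y : D) (m r : ℕ)
    (hU : ∀ n : ℤ, n ≠ 0 →
      ∀ f : (⨁ fun i : Fin (m + 1) => (S.functor.obj)^[(i : ℕ)] X) ⟶
        (shiftFunctor D n).obj (⨁ fun i : Fin (m + 1) => (S.functor.obj)^[(i : ℕ)] X),
        f = 0)
    (hV : ∀ n : ℤ, n ≠ 0 →
      ∀ f : (⨁ fun i : Fin (r + 1) => (S.functor.obj)^[(i : ℕ)] Y) ⟶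
        (shiftFunctor D n).obj (⨁ fun i : Fin (r + 1) => (S.functor.obj)^[(i : ℕ)] Y),
        f = 0) :
    (∀ n : ℤ, n ≠ 0 →
      ∀ f : ((⨁ fun i : Fin (m + 1) => (S.functor.obj)^[(i : ℕ)] X) ⊞
              (⨁ fun i : Fin (r + 1) => (S.functor.obj)^[(i : ℕ)] Y)) ⟶
        (shiftFunctor D n).obj
          ((⨁ fun i : Fin (m + 1) => (S.functor.obj)^[(i : ℕ)] X) ⊞
            (⨁ fun i : Fin (r + 1) => (S.functor.obj)^[(i : ℕ)] Y)),
        f = 0) ↔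
    (∀ z : ℤ, -(m : ℤ) ≤ z → z ≤ (r : ℤ) + 1 → ∀ n : ℤ, n ≠ 0 →
      ∀ f : X ⟶ (shiftFunctor D n).obj (equivPowObj S z Y), f = 0) := by
  classical
  set UF : Fin (m + 1) → D := fun i => (S.functor.obj)^[(i : ℕ)] X with hUF
  set VF : Fin (r + 1) → D := fun i => (S.functor.obj)^[(i : ℕ)] Y with hVF
  set U : D := ⨁ UF with hUdef
  set V : D := ⨁ VF with hVdef
  -- split the binary biproduct
  have hsplit : ∀ n : ℤ, n ≠ 0 →
      ((∀ f : U ⊞ V ⟶ (shiftFunctor D n).obj (U ⊞ V), f = 0) ↔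
        ((∀ f : U ⟶ (shiftFunctor D n).obj V, f = 0) ∧
          (∀ f : V ⟶ (shiftFunctor D n).obj U, f = 0))) := by
    intro n hn
    haveI := preservesBinaryBiproducts_of_preservesBiproducts (shiftFunctor D n)
    calc (∀ f : U ⊞ V ⟶ (shiftFunctor D n).obj (U ⊞ V), f = 0)
        ↔ (∀ f : U ⊞ V ⟶ (shiftFunctor D n).obj U ⊞ (shiftFunctor D n).obj V, f = 0) :=
          zeroIso (Iso.refl _) (Functor.mapBiprod (shiftFunctor D n) U V)
      _ ↔ ((∀ f : U ⟶ (shiftFunctor D n).obj U ⊞ (shiftFunctor D n).obj V, f = 0) ∧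
            (∀ f : V ⟶ (shiftFunctor D n).obj U ⊞ (shiftFunctor D n).obj V, f = 0)) :=
          zeroFromBiprod _ _ _
      _ ↔ (((∀ f : U ⟶ (shiftFunctor D n).obj U, f = 0) ∧
              (∀ f : U ⟶ (shiftFunctor D n).obj V, f = 0)) ∧
            ((∀ f : V ⟶ (shiftFunctor D n).obj U, f = 0) ∧
              (∀ f : V ⟶ (shiftFunctor D n).obj V, f = 0))) :=
          and_congr (zeroToBiprod _ _ _) (zeroToBiprod _ _ _)
      _ ↔ ((∀ f : U ⟶ (shiftFunctor D n).obj V, f = 0) ∧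
            (∀ f : V ⟶ (shiftFunctor D n).obj U, f = 0)) := by
          constructor
          · rintro ⟨⟨_, a⟩, ⟨b, _⟩⟩; exact ⟨a, b⟩
          · rintro ⟨a, b⟩; exact ⟨⟨hU n hn, a⟩, ⟨b, hV n hn⟩⟩
  -- split the big biproducts
  have hUV : ∀ n : ℤ,
      ((∀ f : U ⟶ (shiftFunctor D n).obj V, f = 0) ↔
        ∀ (i : Fin (m + 1)) (j : Fin (r + 1)),
          ∀ f : UF i ⟶ (shiftFunctor D n).obj (VF j), f = 0) := by
    intro n
    calc (∀ f : U ⟶ (shiftFunctor D n).obj V, f = 0)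
        ↔ ∀ i : Fin (m + 1), ∀ f : UF i ⟶ (shiftFunctor D n).obj V, f = 0 :=
          zeroFromBiproduct UF _
      _ ↔ _ := by
          refine forall_congr' fun i => ?_
          calc (∀ f : UF i ⟶ (shiftFunctor D n).obj V, f = 0)
              ↔ (∀ f : UF i ⟶ ⨁ ((shiftFunctor D n).obj ∘ VF), f = 0) :=
                zeroIso (Iso.refl _) (Functor.mapBiproduct (shiftFunctor D n) VF)
            _ ↔ ∀ j : Fin (r + 1), ∀ f : UF i ⟶ (shiftFunctor D n).obj (VF j), f = 0 :=
                zeroToBiproduct _ _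
  have hVU : ∀ n : ℤ,
      ((∀ f : V ⟶ (shiftFunctor D n).obj U, f = 0) ↔
        ∀ (j : Fin (r + 1)) (i : Fin (m + 1)),
          ∀ f : VF j ⟶ (shiftFunctor D n).obj (UF i), f = 0) := by
    intro n
    calc (∀ f : V ⟶ (shiftFunctor D n).obj U, f = 0)
        ↔ ∀ j : Fin (r + 1), ∀ f : VF j ⟶ (shiftFunctor D n).obj U, f = 0 :=
          zeroFromBiproduct VF _
      _ ↔ _ := by
          refine forall_congr' fun j => ?_
          calc (∀ f : VF j ⟶ (shiftFunctor D n).obj U, f = 0)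
              ↔ (∀ f : VF j ⟶ ⨁ ((shiftFunctor D n).obj ∘ UF), f = 0) :=
                zeroIso (Iso.refl _) (Functor.mapBiproduct (shiftFunctor D n) UF)
            _ ↔ ∀ i : Fin (m + 1), ∀ f : VF j ⟶ (shiftFunctor D n).obj (UF i), f = 0 :=
                zeroToBiproduct _ _
  -- middle form
  have mid : (∀ n : ℤ, n ≠ 0 → ∀ f : U ⊞ V ⟶ (shiftFunctor D n).obj (U ⊞ V), f = 0) ↔
      (∀ i : ℕ, i ≤ m → ∀ j : ℕ, j ≤ r + 1 → ∀ n : ℤ, n ≠ 0 →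
        ∀ f : (S.functor.obj)^[i] X ⟶ (shiftFunctor D n).obj ((S.functor.obj)^[j] Y), f = 0) := by
    constructor
    · intro h i hi j hj n hn
      rcases Nat.lt_or_ge j (r + 1) with hj' | hj'
      · exact (hUV n).1 ((hsplit n hn).1 (h n hn)).1 ⟨i, by omega⟩ ⟨j, by omega⟩
      · have hj2 : j = r + 1 := by omega
        subst hj2
        have h1 := (hVU (-n)).1 ((hsplit (-n) (neg_ne_zero.2 hn)).1 (h (-n) (neg_ne_zero.2 hn))).2
          ⟨r, by omega⟩ ⟨i, by omega⟩
        have h2 := (key2 k S hSerre X Y i r (-n)).1 h1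
        rw [neg_neg] at h2
        exact h2
    · intro h n hn
      refine (hsplit n hn).2 ⟨(hUV n).2 fun i j => ?_, (hVU n).2 fun j i => ?_⟩
      · exact h (i : ℕ) (by omega) (j : ℕ) (by omega) n hn
      · exact (key2 k S hSerre X Y (i : ℕ) (j : ℕ) n).2
          (h (i : ℕ) (by omega) ((j : ℕ) + 1) (by omega) (-n) (neg_ne_zero.2 hn))
  rw [mid]
  constructor
  · intro h z hz1 hz2 n hn
    obtain ⟨i, j, hi, hj, hij⟩ : ∃ i j : ℕ, i ≤ m ∧ j ≤ r + 1 ∧ (j : ℤ) - (i : ℤ) = z := by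
      rcases le_or_gt 0 z with h0 | h0
      · exact ⟨0, z.toNat, by omega, by omega, by omega⟩
      · exact ⟨(-z).toNat, 0, by omega, by omega, by omega⟩
    have h1 := (key1 k S hSerre X Y i j n).1 (h i hi j hj n hn)
    rw [hij] at h1
    exact h1
  · intro h i hi j hj n hn
    exact (key1 k S hSerre X Y i j n).2 (h ((j : ℤ) - (i : ℤ)) (by omega) (by omega) n hn)
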